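/- arXiv:1809.10051 — 2 statements merged into one kernel-verified Lean document; each statement's English description precedes it below -/
import Mathlib

section
/- In a complete Boolean algebra with the topology O_{λ_ls} (whose closed sets are the λ_ls-sequentially closed sets), a set F is closed if and only if F is upward-closed and for every decreasing sequence ⟨x_n⟩ in F, ⋀_n x_n ∈ F. -/
/-- F is λ_ls-sequentially closed iff F is upward-closed and closed under
infima of decreasing sequences. -/
theorem stmt_10 {B : Type*} [CompleteBooleanAlgebra B] (F : Set B) :
    (∀ x : ℕ → B, (∀ n, x n ∈ F) →
        ∀ b : B, (⨅ k, ⨆ n, ⨆ _ : n ≥ k, x n) ≤ b → b ∈ F) ↔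
    ((∀ a ∈ F, ∀ b : B, a ≤ b → b ∈ F) ∧
      (∀ x : ℕ → B, (∀ n, x n ∈ F) → Antitone x → (⨅ n, x n) ∈ F)) := by
  constructor
  · intro h
    constructor
    · intro a ha b hab
      refine h (fun _ => a) (fun _ => ha) b ?_
      calc (⨅ k, ⨆ n, ⨆ _ : n ≥ k, (fun _ => a) n) ≤ ⨆ n, ⨆ _ : n ≥ 0, a :=
            iInf_le _ 0
        _ ≤ b := by
            refine iSup_le fun n => iSup_le fun _ => hab
    · intro x hx hanti
      refine h x hx _ ?_
      refine le_iInf fun n => ?_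
      calc (⨅ k, ⨆ m, ⨆ _ : m ≥ k, x m) ≤ ⨆ m, ⨆ _ : m ≥ n, x m := iInf_le _ n
        _ ≤ x n := iSup_le fun m => iSup_le fun hm => hanti hm
  · rintro ⟨hup, hinf⟩ x hx b hb
    set y : ℕ → B := fun k => ⨆ n, ⨆ _ : n ≥ k, x n with hy
    have hyF : ∀ k, y k ∈ F := fun k =>
      hup (x k) (hx k) _ (le_iSup_of_le k (le_iSup_of_le (le_refl k) le_rfl))
    have hanti : Antitone y := fun i j hij =>
      iSup_le fun n => iSup_le fun hn => le_iSup_of_le n (le_iSup_of_le (le_trans hij hn) le_rfl)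
    exact hup _ (hinf y hyF hanti) b hb
end

section
/- If B is a nontrivial complete Boolean algebra, then the topology O_{λ_li} is not the indiscrete topology; in fact O_{λ_li} is T₀. Consequently, if a sequence x has 1 ∈ lim_{O_{λ_li}}(x) and 0 appears as every term of x, then every nonempty open set of O_{λ_li} equals B, a contradiction; hence 1 ∉ lim_{O_{λ_li}}(⟨0,0,...⟩). -/
open TopologicalSpace

def rightTop (B : Type*) [CompleteBooleanAlgebra B] : TopologicalSpace B :=
  generateFrom {U : Set B | ∀ x : ℕ → B, (∀ n, x n ∉ U) →
    ∀ b : B, b ≤ (⨆ k, ⨅ n, ⨅ _ : n ≥ k, x n) → b ∉ U}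

lemma rightTop_isOpen_not_le {B : Type*} [CompleteBooleanAlgebra B] (a : B) :
    @IsOpen B (rightTop B) {c : B | ¬ c ≤ a} := by
  apply TopologicalSpace.isOpen_generateFrom_of_mem
  intro x hx b hb
  simp only [Set.mem_setOf_eq, not_not] at hx ⊢
  refine hb.trans (iSup_le fun k => ?_)
  exact le_trans (le_trans (iInf_le _ k) (iInf_le _ (le_refl k))) (hx k)

/-- If B is nontrivial then O_{λ_li} is not indiscrete, is T₀, and the constant
sequence 0 does not converge to 1 in it. -/
theorem stmt_14 {B : Type*} [CompleteBooleanAlgebra B] (h : (⊥ : B) ≠ ⊤) :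
    rightTop B ≠ (⊤ : TopologicalSpace B) ∧ @T0Space B (rightTop B) ∧
    ¬ Filter.Tendsto (fun _ : ℕ => (⊥ : B)) Filter.atTop
        (@nhds B (rightTop B) ⊤) := by
  letI : TopologicalSpace B := rightTop B
  have hmemT : (⊤ : B) ∈ {c : B | ¬ c ≤ (⊥ : B)} := by
    simp only [Set.mem_setOf_eq, le_bot_iff]
    exact fun hc => h hc.symm
  have hmemB : (⊥ : B) ∉ {c : B | ¬ c ≤ (⊥ : B)} := by
    simp
  refine ⟨?_, ?_, ?_⟩
  · intro heq
    have := rightTop_isOpen_not_le (B := B) (⊥ : B)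
    rw [heq, TopologicalSpace.isOpen_top_iff] at this
    rcases this with h1 | h1
    · rw [h1] at hmemT; exact hmemT
    · rw [h1] at hmemB; exact hmemB (Set.mem_univ _)
  · rw [@t0Space_iff_exists_isOpen_xor'_mem B (rightTop B)]
    intro x y hxy
    rcases (not_and_or.mp (fun hc => hxy (le_antisymm hc.1 hc.2))) with hle | hle
    · exact ⟨{c : B | ¬ c ≤ y}, rightTop_isOpen_not_le y,
        Or.inl ⟨hle, by simp⟩⟩
    · exact ⟨{c : B | ¬ c ≤ x}, rightTop_isOpen_not_le x,
        Or.inr ⟨hle, by simp⟩⟩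
  · intro ht
    have := ht ((rightTop_isOpen_not_le (⊥ : B)).mem_nhds hmemT)
    rcases (Filter.eventually_atTop.mp this) with ⟨n, hn⟩
    exact hmemB (hn n le_rfl)
end
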